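/- If A₁, A₂ ∈ Sⁿ are adjacency matrices of non-isomorphic graphs, i.e., there is no permutation matrix Π with A₁ = Π A₂ Πᵀ, then there exists P ∈ Sⁿ such that Θ_P(A₁) ≠ Θ_P(A₂). Hence the elementary convex graph invariants form a complete set of invariants. -/

import Mathlib

open Matrix

noncomputable def permConj {n : ℕ} (σ : Equiv.Perm (Fin n))
    (A : Matrix (Fin n) (Fin n) ℝ) : Matrix (Fin n) (Fin n) ℝ :=
  (σ.permMatrix ℝ) * A * (σ.permMatrix ℝ)ᵀ

/-- The elementary convex graph invariant `Θ_P(A) = max_Π tr(P Π A Πᵀ)`. -/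
noncomputable def theta {n : ℕ} (P A : Matrix (Fin n) (Fin n) ℝ) : ℝ :=
  (Finset.univ : Finset (Equiv.Perm (Fin n))).sup' Finset.univ_nonempty
    (fun σ => (P * permConj σ A).trace)

lemma permConj_apply {n : ℕ} (σ : Equiv.Perm (Fin n)) (A : Matrix (Fin n) (Fin n) ℝ)
    (i j : Fin n) : permConj σ A i j = A (σ i) (σ j) := by
  simp [permConj, Matrix.mul_apply, Equiv.Perm.permMatrix, PEquiv.toMatrix,
    Equiv.toPEquiv, Finset.sum_ite_eq, Finset.mul_sum, eq_comm]

lemma permConj_one {n : ℕ} (A : Matrix (Fin n) (Fin n) ℝ) : permConj 1 A = A := by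
  ext i j; simp [permConj_apply]

noncomputable def emb {n : ℕ} (A : Matrix (Fin n) (Fin n) ℝ) :
    EuclideanSpace ℝ (Fin n × Fin n) := WithLp.toLp 2 (fun p : Fin n × Fin n => A p.1 p.2)

lemma emb_inj {n : ℕ} {A B : Matrix (Fin n) (Fin n) ℝ} (h : emb A = emb B) : A = B := by
  ext i j; exact congrArg (fun x : EuclideanSpace ℝ (Fin n × Fin n) => x (i, j)) h

lemma inner_emb {n : ℕ} (A B : Matrix (Fin n) (Fin n) ℝ) :
    inner ℝ (emb A) (emb B) = ∑ p : Fin n × Fin n, A p.1 p.2 * B p.1 p.2 := by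
  simp [PiLp.inner_apply, emb, RCLike.inner_apply, mul_comm]

lemma trace_mul_eq_inner {n : ℕ} {P : Matrix (Fin n) (Fin n) ℝ} (hP : P.IsSymm)
    (B : Matrix (Fin n) (Fin n) ℝ) :
    (P * B).trace = (inner ℝ (emb P) (emb B) : ℝ) := by
  rw [inner_emb]
  rw [Fintype.sum_prod_type]
  rw [Matrix.trace]
  simp only [Matrix.diag, Matrix.mul_apply]
  rw [Finset.sum_comm]
  refine Finset.sum_congr rfl fun i _ => Finset.sum_congr rfl fun j _ => ?_
  rw [show P j i = Pᵀ i j from rfl, hP]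

lemma inner_permConj {n : ℕ} (σ : Equiv.Perm (Fin n)) (A B : Matrix (Fin n) (Fin n) ℝ) :
    (inner ℝ (emb (permConj σ A)) (emb (permConj σ B)) : ℝ) = inner ℝ (emb A) (emb B) := by
  rw [inner_emb, inner_emb]
  exact Fintype.sum_equiv (Equiv.prodCongr σ σ) _ _ (fun p => by simp [permConj_apply])

lemma norm_emb_permConj {n : ℕ} (σ : Equiv.Perm (Fin n)) (A : Matrix (Fin n) (Fin n) ℝ) :
    ‖emb (permConj σ A)‖ = ‖emb A‖ := by
  have h := inner_permConj σ A A
  rw [real_inner_self_eq_norm_sq, real_inner_self_eq_norm_sq] at h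
  rw [← Real.sqrt_sq (norm_nonneg (emb (permConj σ A))), ← Real.sqrt_sq (norm_nonneg (emb A)), h]


theorem stmt4 (n : ℕ) (A₁ A₂ : Matrix (Fin n) (Fin n) ℝ)
    (h₁ : A₁.IsSymm) (h₂ : A₂.IsSymm)
    (hniso : ¬ ∃ σ : Equiv.Perm (Fin n), A₁ = permConj σ A₂) :
    ∃ P : Matrix (Fin n) (Fin n) ℝ, P.IsSymm ∧ theta P A₁ ≠ theta P A₂ := by
  by_contra hc
  push_neg at hc
  have heq : ∀ P : Matrix (Fin n) (Fin n) ℝ, P.IsSymm → theta P A₁ = theta P A₂ :=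
    fun P hP => hc P hP
  set N₁ := ‖emb A₁‖ with hN₁
  set N₂ := ‖emb A₂‖ with hN₂
  -- upper bound for theta
  have hub : ∀ (P A : Matrix (Fin n) (Fin n) ℝ), P.IsSymm →
      theta P A ≤ ‖emb P‖ * ‖emb A‖ := by
    intro P A hP
    apply Finset.sup'_le
    intro σ _
    rw [trace_mul_eq_inner hP]
    calc (inner ℝ (emb P) (emb (permConj σ A)) : ℝ)
        ≤ ‖emb P‖ * ‖emb (permConj σ A)‖ := real_inner_le_norm _ _
      _ = ‖emb P‖ * ‖emb A‖ := by rw [norm_emb_permConj]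
  -- lower bound: theta A A ≥ ‖A‖²
  have hlb : ∀ (A : Matrix (Fin n) (Fin n) ℝ), A.IsSymm → ‖emb A‖ ^ 2 ≤ theta A A := by
    intro A hA
    have := Finset.le_sup' (fun σ : Equiv.Perm (Fin n) => (A * permConj σ A).trace)
      (Finset.mem_univ (1 : Equiv.Perm (Fin n)))
    rw [permConj_one, trace_mul_eq_inner hA, real_inner_self_eq_norm_sq] at this
    exact this
  have e1 : N₁ ^ 2 ≤ N₁ * N₂ := by
    calc N₁ ^ 2 ≤ theta A₁ A₁ := hlb A₁ h₁
      _ = theta A₁ A₂ := heq A₁ h₁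
      _ ≤ N₁ * N₂ := hub A₁ A₂ h₁
  have e2 : N₂ ^ 2 ≤ N₂ * N₁ := by
    calc N₂ ^ 2 ≤ theta A₂ A₂ := hlb A₂ h₂
      _ = theta A₂ A₁ := (heq A₂ h₂).symm
      _ ≤ N₂ * N₁ := hub A₂ A₁ h₂
  have hNN : N₁ = N₂ := by nlinarith [sq_nonneg (N₁ - N₂)]
  by_cases h0 : N₁ = 0
  · apply hniso
    refine ⟨1, ?_⟩
    have hA1 : A₁ = 0 := by
      apply emb_inj; have : emb A₁ = 0 := norm_eq_zero.mp h0
      simpa [emb, Pi.zero_def] using this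
    have hA2 : A₂ = 0 := by
      apply emb_inj; have : emb A₂ = 0 := norm_eq_zero.mp (by rw [show ‖emb A₂‖ = N₁ from hNN.symm]; exact h0)
      simpa [emb, Pi.zero_def] using this
    rw [hA1, hA2, permConj_one]
  · -- sup achieved
    obtain ⟨σ, -, hσ⟩ := Finset.exists_mem_eq_sup'
      (Finset.univ_nonempty : (Finset.univ : Finset (Equiv.Perm (Fin n))).Nonempty)
      (fun σ => (A₁ * permConj σ A₂).trace)
    have key : (inner ℝ (emb A₁) (emb (permConj σ A₂)) : ℝ)
        = ‖emb A₁‖ * ‖emb (permConj σ A₂)‖ := by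
      have hle : (inner ℝ (emb A₁) (emb (permConj σ A₂)) : ℝ) ≤ N₁ * N₂ := by
        calc (inner ℝ (emb A₁) (emb (permConj σ A₂)) : ℝ)
            ≤ ‖emb A₁‖ * ‖emb (permConj σ A₂)‖ := real_inner_le_norm _ _
          _ = N₁ * N₂ := by rw [norm_emb_permConj]
      have hge : N₁ * N₂ ≤ (inner ℝ (emb A₁) (emb (permConj σ A₂)) : ℝ) := by
        have : N₁ ^ 2 ≤ (A₁ * permConj σ A₂).trace := by
          calc N₁ ^ 2 ≤ theta A₁ A₁ := hlb A₁ h₁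
            _ = theta A₁ A₂ := heq A₁ h₁
            _ = (A₁ * permConj σ A₂).trace := hσ
        rw [trace_mul_eq_inner h₁] at this
        calc N₁ * N₂ = N₁ ^ 2 := by rw [hNN]; ring
          _ ≤ _ := this
      rw [norm_emb_permConj, ← hN₁, ← hN₂]
      linarith
    rw [inner_eq_norm_mul_iff_real] at key
    rw [norm_emb_permConj, ← hN₁, ← hN₂, ← hNN] at key
    have : emb A₁ = emb (permConj σ A₂) := smul_right_injective _ h0 key
    exact hniso ⟨σ, emb_inj this⟩
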